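/- Let T, T', and T̄ be standard Young tableaux of shape (n,n,n) with words w, w', w̄ and depth sequences d, d', d̄. Suppose T̄ → T' is a covering move swapping i and i+1 (so d̄_j ≤ d'_j for all j), and suppose d_j ≤ d̄_j for all j. If moreover w has an allowed swap at position i (w_i w_{i+1} ∈ {-+, -0, 0+}) producing tableau T'' with depth sequence d'', then d''_j ≤ d'_j for all j. -/

import Mathlib

/-- Symbols of the word of a three-row tableau / `sl₃` web boundary word. -/
inductive BSym
  | plus
  | zero
  | minus
deriving DecidableEq

/-- The symbol recording each row of a three-row tableau: row `0` (top) is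
`+`, row `1` (middle) is `0`, row `2` (bottom) is `-`. -/
def symOfRow (r : Fin 3) : BSym :=
  if r = 0 then BSym.plus else if r = 1 then BSym.zero else BSym.minus

/-- A standard Young tableau of rectangular shape with `k` rows and `n`
columns: a filling of the `k × n` grid with the numbers `1, ..., k*n`, each
occurring exactly once, increasing along rows (left to right) and down
columns. -/
structure SYTRect (k n : ℕ) where
  entry : Fin k → Fin n → ℕ
  mem_Icc : ∀ r c, entry r c ∈ Finset.Icc 1 (k * n)
  inj : ∀ r₁ c₁ r₂ c₂, entry r₁ c₁ = entry r₂ c₂ → r₁ = r₂ ∧ c₁ = c₂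
  row_lt : ∀ (r : Fin k) (c₁ c₂ : Fin n), c₁ < c₂ → entry r c₁ < entry r c₂
  col_lt : ∀ (r₁ r₂ : Fin k) (c : Fin n), r₁ < r₂ → entry r₁ c < entry r₂ c

/-- `w` is the boundary word of the three-row standard tableau `T`: for each
position `p` in `{1, ..., 3n}`, the symbol `w p` is `+`, `0` or `-`
according to whether `p` lies in row 1, 2 or 3 of `T`. -/
def IsWordOf {n : ℕ} (T : SYTRect 3 n) (w : ℕ → BSym) : Prop :=
  ∀ p ∈ Finset.Icc 1 (3 * n), ∀ r : Fin 3,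
    ((∃ c, T.entry r c = p) ↔ w p = symOfRow r)

/-- The step value of a symbol: `+ ↦ 1`, `0 ↦ 0`, `- ↦ -1`. -/
def symVal : BSym → ℤ
  | BSym.plus => 1
  | BSym.zero => 0
  | BSym.minus => -1

/-- The depth sequence of a word: `dseq w j` is the sum of the step values
of the first `j` letters (positions `1, ..., j`). -/
def dseq (w : ℕ → BSym) (j : ℕ) : ℤ :=
  ∑ p ∈ Finset.Icc 1 j, symVal (w p)

private lemma dseq_succ' (w : ℕ → BSym) (m : ℕ) :
    dseq w (m + 1) = dseq w m + symVal (w (m + 1)) := by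
  unfold dseq
  rw [Finset.sum_Icc_succ_top (Nat.succ_le_succ (Nat.zero_le m))]

private lemma dseq_split' (w : ℕ → BSym) {m j : ℕ} (h : m ≤ j) :
    dseq w j = dseq w m + ∑ p ∈ Finset.Ioc m j, symVal (w p) := by
  unfold dseq
  rw [show Finset.Icc 1 j = Finset.Ioc 0 j from by rw [← Finset.Icc_add_one_left_eq_Ioc, zero_add],
      show Finset.Icc 1 m = Finset.Ioc 0 m from by rw [← Finset.Icc_add_one_left_eq_Ioc, zero_add],
      Finset.sum_Ioc_consecutive _ (Nat.zero_le m) h]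

/-- Diamond lemma for depth sequences.  Suppose `T̄ → T'` is a covering move
swapping positions `i`, `i+1` (so the depth sequence of `T̄` is pointwise at
most that of `T'`), and suppose the depth sequence of `T` is pointwise at
most that of `T̄`.  If moreover the word `w` of `T` has an allowed swap at
position `i` (symbols `-+`, `-0` or `0+`) producing a standard tableau `T''`,
then the depth sequence of `T''` is pointwise at most that of `T'`. -/
theorem dseq_diamond (n : ℕ) (T T' Tb T'' : SYTRect 3 n) (i : ℕ)
    (hi : 1 ≤ i) (hi1 : i + 1 ≤ 3 * n)
    (w w' wb w'' : ℕ → BSym)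
    (hw : IsWordOf T w) (hw' : IsWordOf T' w')
    (hwb : IsWordOf Tb wb) (hw'' : IsWordOf T'' w'')
    (hcov_off : ∀ p ∈ Finset.Icc 1 (3 * n), p ≠ i → p ≠ i + 1 → w' p = wb p)
    (hcov_i : w' i = wb (i + 1)) (hcov_i1 : w' (i + 1) = wb i)
    (hcov_case : (wb i, wb (i + 1)) = (BSym.zero, BSym.plus) ∨
      (wb i, wb (i + 1)) = (BSym.minus, BSym.zero) ∨
      (wb i, wb (i + 1)) = (BSym.minus, BSym.plus))
    (hle : ∀ j ≤ 3 * n, dseq w j ≤ dseq wb j)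
    (hcase : (w i, w (i + 1)) = (BSym.zero, BSym.plus) ∨
      (w i, w (i + 1)) = (BSym.minus, BSym.zero) ∨
      (w i, w (i + 1)) = (BSym.minus, BSym.plus))
    (hswap_off : ∀ p ∈ Finset.Icc 1 (3 * n), p ≠ i → p ≠ i + 1 → w'' p = w p)
    (hswap_i : w'' i = w (i + 1)) (hswap_i1 : w'' (i + 1) = w i) :
    ∀ j ≤ 3 * n, dseq w'' j ≤ dseq w' j :=  by
  obtain ⟨k, rfl⟩ : ∃ k, i = k + 1 := ⟨i - 1, (Nat.succ_pred_eq_of_pos hi).symm⟩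
  have hpre : ∀ (f g : ℕ → BSym),
      (∀ p ∈ Finset.Icc 1 (3 * n), p ≠ k + 1 → p ≠ k + 1 + 1 → f p = g p) →
      ∀ m ≤ k, dseq f m = dseq g m := by
    intro f g hfg m hm
    unfold dseq
    refine Finset.sum_congr rfl fun p hp => ?_
    simp only [Finset.mem_Icc] at hp
    rw [hfg p (Finset.mem_Icc.mpr ⟨hp.1, by omega⟩) (by omega) (by omega)]
  have hP : dseq w'' k = dseq w k := hpre w'' w hswap_off k le_rfl
  have hQ : dseq w' k = dseq wb k := hpre w' wb hcov_off k le_rfl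
  have hvP : dseq w'' (k + 1) = dseq w k + symVal (w (k + 1 + 1)) := by
    rw [dseq_succ', hP, hswap_i]
  have hvQ : dseq w' (k + 1) = dseq wb k + symVal (wb (k + 1 + 1)) := by
    rw [dseq_succ', hQ, hcov_i]
  have hvP2 : dseq w'' (k + 1 + 1) = dseq w (k + 1 + 1) := by
    rw [dseq_succ', hvP, hswap_i1, dseq_succ', dseq_succ']
    ring
  have hvQ2 : dseq w' (k + 1 + 1) = dseq wb (k + 1 + 1) := by
    rw [dseq_succ', hvQ, hcov_i1, dseq_succ', dseq_succ']
    ring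
  have htail : ∀ (f g : ℕ → BSym),
      (∀ p ∈ Finset.Icc 1 (3 * n), p ≠ k + 1 → p ≠ k + 1 + 1 → f p = g p) →
      dseq f (k + 1 + 1) = dseq g (k + 1 + 1) →
      ∀ j, k + 1 + 1 ≤ j → j ≤ 3 * n → dseq f j = dseq g j := by
    intro f g hfg h2 j hj hj3
    rw [dseq_split' f hj, dseq_split' g hj, h2]
    congr 1
    refine Finset.sum_congr rfl fun p hp => ?_
    simp only [Finset.mem_Ioc] at hp
    rw [hfg p (Finset.mem_Icc.mpr ⟨by omega, by omega⟩) (by omega) (by omega)]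
  intro j hj
  rcases lt_trichotomy j (k + 1) with hlt | heq | hgt
  · have h1 : dseq w'' j = dseq w j := hpre w'' w hswap_off j (by omega)
    have h2 : dseq w' j = dseq wb j := hpre w' wb hcov_off j (by omega)
    rw [h1, h2]; exact hle j hj
  · subst heq
    have h1 : dseq w k ≤ dseq wb k := hle k (by omega)
    have h2 := hle (k + 1 + 1) (by omega)
    simp only [dseq_succ'] at h2
    rw [hvP, hvQ]
    rcases hcase with hc | hc | hc <;> rcases hcov_case with hb | hb | hb <;>
      simp only [Prod.mk.injEq] at hc hb <;>
      simp only [hc.1, hc.2, hb.1, hb.2, symVal] at h2 ⊢ <;> linarith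
  · have h1 : dseq w'' j = dseq w j :=
      htail w'' w hswap_off hvP2 j (by omega) hj
    have h2 : dseq w' j = dseq wb j :=
      htail w' wb hcov_off hvQ2 j (by omega) hj
    rw [h1, h2]; exact hle j hj
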